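/- Let J be a proper lsc convex function on ℝⁿ, A ∈ ℝ^{m×n}, b₀ ∈ ℝᵐ, and x₀ a feasible point of the problem min J(x) s.t. Ax = b₀. Then x₀ is the unique solution of this problem if and only if Ker A ∩ D_J(x₀) = {0}, where D_J(x₀) = cone{x - x₀ : J(x) ≤ J(x₀)} is the descent cone of J at x₀. -/
import Mathlib


open scoped InnerProductSpace

/-- For a proper lsc convex `J`, a linear map `A` and a feasible point `x₀`
(`A x₀ = b₀`, `J x₀ < ∞`), `x₀` is the unique solution of `min J(x) s.t. Ax = b₀` iff
`Ker A ∩ D_J(x₀) = {0}`, where `D_J(x₀) = cone {x - x₀ : J x ≤ J x₀}` is the descent cone. -/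
theorem unique_solution_iff_kernel_inter_descent_cone
    (n m : ℕ) (J : EuclideanSpace ℝ (Fin n) → EReal)
    (hproper_bot : ∀ x, ⊥ < J x)
    (hconvex : ∀ x y, ∀ a b : ℝ, 0 ≤ a → 0 ≤ b → a + b = 1 →
      J (a • x + b • y) ≤ (a : EReal) * J x + (b : EReal) * J y)
    (hlsc : LowerSemicontinuous J)
    (A : EuclideanSpace ℝ (Fin n) →L[ℝ] EuclideanSpace ℝ (Fin m))
    (b₀ : EuclideanSpace ℝ (Fin m))
    (x₀ : EuclideanSpace ℝ (Fin n)) (hfeas : A x₀ = b₀) (hfin : J x₀ < ⊤)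
    (DJ : Set (EuclideanSpace ℝ (Fin n)))
    (hDJ : DJ = {hh | ∃ l > (0 : ℝ), ∃ x, J x ≤ J x₀ ∧ hh = l • (x - x₀)}) :
    (∀ x, A x = b₀ → x ≠ x₀ → J x₀ < J x) ↔
      {h | A h = 0} ∩ DJ = {0} := by
  subst hDJ
  constructor
  · intro huniq
    ext h
    simp only [Set.mem_inter_iff, Set.mem_setOf_eq, Set.mem_singleton_iff]
    constructor
    · rintro ⟨hA0, l, hl, x, hJx, rfl⟩
      by_contra hne
      have hxne : x ≠ x₀ := by
        rintro rfl
        simp at hne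
      have hAx : A x = b₀ := by
        have : l • (A x - A x₀) = 0 := by
          simpa [map_sub] using hA0
        have : A x - A x₀ = 0 := by
          rcases smul_eq_zero.mp this with h | h
          · exact absurd h (ne_of_gt hl)
          · exact h
        have := sub_eq_zero.mp this
        rw [this, hfeas]
      exact absurd hJx (not_le.mpr (huniq x hAx hxne))
    · rintro rfl
      refine ⟨by simp, 1, one_pos, x₀, le_refl _, by simp⟩
  · intro hset x hAx hxne
    by_contra hlt
    push_neg at hlt
    have hmem : x - x₀ ∈ ({h | A h = 0} ∩ {hh | ∃ l > (0 : ℝ), ∃ y, J y ≤ J x₀ ∧ hh = l • (y - x₀)}) := by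
      refine ⟨by simp [map_sub, hAx, hfeas], 1, one_pos, x, hlt, by simp⟩
    rw [hset] at hmem
    exact hxne (sub_eq_zero.mp hmem)
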